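/- Let d ≥ 2 and let ‖·‖_X be a continuous quasi-norm on ℝ^d that is monotone (for x, y in the same closed orthant with |x_j| ≤ |y_j| for all j one has ‖x‖_X ≤ ‖y‖_X) and strictly monotone in the sense that |x_j| < |y_j| for all j implies ‖x‖_X < ‖y‖_X. Let ‖·‖_Y be a quasi-norm on ℝ^d with unit ball B_Y, and set M := sup{‖u‖_Y : ‖u‖_∞ ≤ 1}. Let S_X = {x : ‖x‖_X = 1}, B_X = {x : ‖x‖_X ≤ 1}, and H_i = {x ∈ ℝ^d : x_i = 0}. Then for every natural number k > d + ⌈log₂ d⌉, e_k(S_X, B_Y) ≤ 2 M · max_{1≤i≤d} e_{k − d − ⌈log₂ d⌉}(B_X ∩ H_i, B_∞^d ∩ H_i), where B_∞^d = {x : ‖x‖_∞ ≤ 1}. -/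

import Mathlib

open scoped Pointwise BigOperators

/-- A quasi-norm on `ℝ^d`: nonnegative, definite, absolutely homogeneous, and satisfying the
quasi-triangle inequality `‖x + y‖ ≤ C(‖x‖ + ‖y‖)` for some `C ≥ 1`. -/
def IsQuasiNorm {d : ℕ} (f : (Fin d → ℝ) → ℝ) : Prop :=
  (∀ x, 0 ≤ f x) ∧ (∀ x, f x = 0 ↔ x = 0) ∧
  (∀ (l : ℝ) (x), f (l • x) = |l| * f x) ∧
  (∃ C : ℝ, 1 ≤ C ∧ ∀ x y, f (x + y) ≤ C * (f x + f y))

/-- The `ℓ_∞` norm on `ℝ^d`. -/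
noncomputable def supNorm {d : ℕ} (x : Fin d → ℝ) : ℝ :=
  ⨆ i, |x i|

/-- The closed unit ball of `ℓ_∞^d`. -/
def supBall (d : ℕ) : Set (Fin d → ℝ) := {x | supNorm x ≤ 1}

/-- The orthogonal projection of `ℝ^d` onto the hyperplane `{x : x_i = 0}`,
setting the `i`-th coordinate to zero. -/
def proj {d : ℕ} (i : Fin d) (x : Fin d → ℝ) : Fin d → ℝ :=
  Function.update x i 0

/-- The `k`-th (dyadic) entropy number of `K` with respect to the "unit ball" `B`:
the infimum of all `ε > 0` such that `K` can be covered by `2^(k-1)` translates of `ε • B`. -/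
noncomputable def entropyNumber {d : ℕ} (K B : Set (Fin d → ℝ)) (k : ℕ) : ℝ :=
  sInf {ε : ℝ | 0 < ε ∧ ∃ c : Fin (2 ^ (k - 1)) → (Fin d → ℝ),
    K ⊆ ⋃ j, (c j +ᵥ ε • B)}

/-- Monotonicity of a quasi-norm: for `x, y` lying in the same closed orthant
(equivalently `x_j y_j ≥ 0` for all `j`) with `|x_j| ≤ |y_j|` for all `j`, `‖x‖ ≤ ‖y‖`. -/
def IsMonotoneQuasiNorm {d : ℕ} (f : (Fin d → ℝ) → ℝ) : Prop :=
  ∀ x y : Fin d → ℝ, (∀ j, 0 ≤ x j * y j) → (∀ j, |x j| ≤ |y j|) → f x ≤ f y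

section Aux

variable {d : ℕ}

lemma abs_le_supNorm (x : Fin d → ℝ) (i : Fin d) : |x i| ≤ supNorm x := by
  simpa [supNorm] using le_ciSup (Set.Finite.bddAbove (Set.finite_range fun j => |x j|)) i

lemma supNorm_le_of [Nonempty (Fin d)] {x : Fin d → ℝ} {a : ℝ} (h : ∀ i, |x i| ≤ a) :
    supNorm x ≤ a := ciSup_le h

lemma qnorm_zero {f : (Fin d → ℝ) → ℝ} (h : IsQuasiNorm f) : f 0 = 0 := (h.2.1 0).mpr rfl

lemma qnorm_sum_le {α : Type*} (f : (Fin d → ℝ) → ℝ) (h0 : ∀ x, 0 ≤ f x) (hz : f 0 = 0)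
    {C : ℝ} (hC : 1 ≤ C) (htri : ∀ x y, f (x + y) ≤ C * (f x + f y))
    (s : Finset α) (g : α → (Fin d → ℝ)) :
    f (∑ i ∈ s, g i) ≤ C ^ s.card * ∑ i ∈ s, f (g i) := by
  classical
  induction s using Finset.induction with
  | empty => simp [hz]
  | @insert a s ha ih =>
    rw [Finset.sum_insert ha, Finset.sum_insert ha, Finset.card_insert_of_notMem ha]
    have hCpos : (0:ℝ) < C := by linarith
    have hCpow : (1:ℝ) ≤ C ^ s.card := one_le_pow₀ hC
    have hfs : 0 ≤ ∑ i ∈ s, f (g i) := Finset.sum_nonneg fun i _ => h0 _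
    have h1 : C * f (g a) ≤ C ^ s.card * C * f (g a) := by
      calc C * f (g a) = 1 * (C * f (g a)) := by ring
      _ ≤ C ^ s.card * (C * f (g a)) :=
        mul_le_mul_of_nonneg_right hCpow (mul_nonneg hCpos.le (h0 _))
      _ = C ^ s.card * C * f (g a) := by ring
    calc f (g a + ∑ i ∈ s, g i) ≤ C * (f (g a) + f (∑ i ∈ s, g i)) := htri _ _
    _ ≤ C * (f (g a) + C ^ s.card * ∑ i ∈ s, f (g i)) := by nlinarith
    _ = C * f (g a) + C ^ s.card * C * ∑ i ∈ s, f (g i) := by ring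
    _ ≤ C ^ s.card * C * f (g a) + C ^ s.card * C * ∑ i ∈ s, f (g i) := by linarith
    _ = C ^ (s.card + 1) * (f (g a) + ∑ i ∈ s, f (g i)) := by rw [pow_succ]; ring

lemma qnorm_bddAbove [Nonempty (Fin d)] {f : (Fin d → ℝ) → ℝ} (h : IsQuasiNorm f) :
    BddAbove (f '' {u | supNorm u ≤ 1}) := by
  obtain ⟨h0, hdef, hhom, C, hC, htri⟩ := h
  have hz : f 0 = 0 := by have := hhom 0 0; simpa using this
  refine ⟨C ^ d * ∑ i : Fin d, f (Pi.single i 1), ?_⟩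
  rintro - ⟨u, hu, rfl⟩
  have hu' : ∀ i, |u i| ≤ 1 := fun i => le_trans (abs_le_supNorm u i) hu
  have hdecomp : u = ∑ i : Fin d, Pi.single i (u i) := (Finset.univ_sum_single u).symm
  calc f u = f (∑ i : Fin d, Pi.single i (u i)) := by rw [← hdecomp]
  _ ≤ C ^ (Finset.univ : Finset (Fin d)).card * ∑ i : Fin d, f (Pi.single i (u i)) :=
      qnorm_sum_le f h0 hz hC htri Finset.univ _
  _ ≤ C ^ d * ∑ i : Fin d, f (Pi.single i 1) := by
      rw [Finset.card_univ, Fintype.card_fin]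
      have hCpow : (0:ℝ) ≤ C ^ d := pow_nonneg (by linarith) d
      refine mul_le_mul_of_nonneg_left (Finset.sum_le_sum fun i _ => ?_) hCpow
      have : Pi.single i (u i) = (u i) • (Pi.single i (1:ℝ) : Fin d → ℝ) := by
        funext j; by_cases hji : j = i <;> simp [hji, Pi.single_apply]
      rw [this, hhom]
      calc |u i| * f (Pi.single i 1) ≤ 1 * f (Pi.single i 1) :=
        mul_le_mul_of_nonneg_right (hu' i) (h0 _)
      _ = f (Pi.single i 1) := one_mul _

lemma qnorm_le_M [Nonempty (Fin d)] {f : (Fin d → ℝ) → ℝ} (h : IsQuasiNorm f)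
    (M : ℝ) (hM : M = sSup (f '' {u | supNorm u ≤ 1})) (u : Fin d → ℝ) :
    f u ≤ M * supNorm u := by
  by_cases hu : u = 0
  · subst hu
    have hz : f 0 = 0 := qnorm_zero h
    have : supNorm (0 : Fin d → ℝ) = 0 := by simp [supNorm, ciSup_const]
    rw [hz, this, mul_zero]
  · have ha : 0 < supNorm u := by
      obtain ⟨i, hi⟩ : ∃ i, u i ≠ 0 := by
        by_contra hcon; push_neg at hcon; exact hu (funext hcon)
      exact lt_of_lt_of_le (abs_pos.mpr hi) (abs_le_supNorm u i)
    set a := supNorm u with hadef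
    have hmem : (a⁻¹ • u) ∈ {u | supNorm u ≤ 1} := by
      refine supNorm_le_of fun i => ?_
      have h1 : |a⁻¹ * u i| = a⁻¹ * |u i| := by
        rw [abs_mul, abs_of_nonneg (inv_nonneg.mpr ha.le)]
      show |(a⁻¹ • u) i| ≤ 1
      simp only [Pi.smul_apply, smul_eq_mul, h1]
      rw [inv_mul_le_iff₀ ha, mul_one]
      exact abs_le_supNorm u i
    have hle : f (a⁻¹ • u) ≤ M := hM ▸ le_csSup (qnorm_bddAbove h) ⟨_, hmem, rfl⟩
    have heq : f u = a * f (a⁻¹ • u) := by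
      rw [h.2.2.1, abs_of_nonneg (inv_nonneg.mpr ha.le)]
      field_simp
    rw [heq, mul_comm M a]
    exact mul_le_mul_of_nonneg_left hle ha.le

lemma qnorm_lower {f : (Fin d → ℝ) → ℝ} (hq : IsQuasiNorm f) (hc : Continuous f)
    (hd : 0 < d) : ∃ R > 0, ∀ x, f x ≤ 1 → supNorm x ≤ R := by
  haveI : Nonempty (Fin d) := ⟨⟨0, hd⟩⟩
  haveI : Nontrivial (Fin d → ℝ) := inferInstance
  have hsph : (Metric.sphere (0 : Fin d → ℝ) 1).Nonempty :=
    NormedSpace.sphere_nonempty.mpr zero_le_one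
  obtain ⟨x₀, hx₀, hmin⟩ :=
    (isCompact_sphere (0 : Fin d → ℝ) 1).exists_isMinOn hsph hc.continuousOn
  have hx₀norm : ‖x₀‖ = 1 := mem_sphere_zero_iff_norm.mp hx₀
  have hx₀ne : x₀ ≠ 0 := by intro h; rw [h, norm_zero] at hx₀norm; norm_num at hx₀norm
  have hcpos : 0 < f x₀ := lt_of_le_of_ne (hq.1 x₀) fun h => hx₀ne ((hq.2.1 x₀).mp h.symm)
  refine ⟨1 / f x₀, by positivity, fun x hx => ?_⟩
  have hsupn : supNorm x ≤ ‖x‖ := supNorm_le_of fun i => by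
    simpa [Real.norm_eq_abs] using norm_le_pi_norm x i
  rcases eq_or_ne x 0 with rfl | hxne
  · refine le_trans hsupn ?_; rw [norm_zero]; positivity
  · have hnx : (0:ℝ) < ‖x‖ := norm_pos_iff.mpr hxne
    have humem : ‖x‖⁻¹ • x ∈ Metric.sphere (0 : Fin d → ℝ) 1 := by
      rw [mem_sphere_zero_iff_norm, norm_smul, norm_inv, norm_norm]
      field_simp
    have hfu : f x₀ ≤ f (‖x‖⁻¹ • x) := hmin humem
    have hfx : f x = ‖x‖ * f (‖x‖⁻¹ • x) := by
      rw [hq.2.2.1, abs_of_nonneg (inv_nonneg.mpr hnx.le)]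
      field_simp
    have hkey : ‖x‖ * f x₀ ≤ 1 := by
      calc ‖x‖ * f x₀ ≤ ‖x‖ * f (‖x‖⁻¹ • x) := mul_le_mul_of_nonneg_left hfu hnx.le
      _ = f x := hfx.symm
      _ ≤ 1 := hx
    refine le_trans hsupn ?_
    rw [le_div_iff₀ hcpos]
    linarith

end Aux

set_option maxHeartbeats 2000000 in
theorem entropy_sphere_upper_general (d : ℕ) (hd : 2 ≤ d)
    (nX nY : (Fin d → ℝ) → ℝ)
    (hX : IsQuasiNorm nX) (hXc : Continuous nX)
    (hXmono : IsMonotoneQuasiNorm nX)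
    (hXstrict : ∀ x y : Fin d → ℝ, (∀ j, 0 ≤ x j * y j) →
      (∀ j, |x j| < |y j|) → nX x < nX y)
    (hY : IsQuasiNorm nY)
    (M : ℝ) (hM : M = sSup (nY '' {u | supNorm u ≤ 1}))
    (k : ℕ) (hk : d + Nat.clog 2 d < k) :
    entropyNumber {x | nX x = 1} {x | nY x ≤ 1} k ≤
      2 * M * ⨆ i : Fin d,
        entropyNumber ({x | nX x ≤ 1} ∩ {x | x i = 0})
          (supBall d ∩ {x | x i = 0}) (k - d - Nat.clog 2 d) := by
  haveI : Nonempty (Fin d) := ⟨⟨0, by omega⟩⟩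
  set k' := k - d - Nat.clog 2 d with hk'def
  set E := ⨆ i : Fin d, entropyNumber ({x | nX x ≤ 1} ∩ {x | x i = 0})
      (supBall d ∩ {x | x i = 0}) k' with hE
  obtain ⟨hY0, hYdef, hYhom, CY, hCY, hYtri⟩ := hY
  have hYq : IsQuasiNorm nY := ⟨hY0, hYdef, hYhom, CY, hCY, hYtri⟩
  have hMle : ∀ u, nY u ≤ M * supNorm u := qnorm_le_M hYq M hM
  have hMpos : 0 < M := by
    set i0 : Fin d := ⟨0, by omega⟩ with hi0
    have hepos : 0 < nY (Pi.single i0 (1:ℝ)) := by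
      refine lt_of_le_of_ne (hY0 _) fun h => ?_
      have h2 := (hYdef _).mp h.symm
      have h1 := congrFun h2 i0
      rw [Pi.single_eq_same] at h1
      simp at h1
    have hmem : (Pi.single i0 (1:ℝ)) ∈ {u | supNorm u ≤ 1} := by
      refine supNorm_le_of fun i => ?_
      by_cases hi : i = i0 <;> simp [hi, Pi.single_apply]
    have : nY (Pi.single i0 (1:ℝ)) ≤ M :=
      hM ▸ le_csSup (qnorm_bddAbove hYq) ⟨_, hmem, rfl⟩
    linarith
  obtain ⟨R, hRpos, hR⟩ := qnorm_lower hX hXc (by omega)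
  have hbddE : BddAbove (Set.range fun i : Fin d => entropyNumber
      ({x | nX x ≤ 1} ∩ {x | x i = 0}) (supBall d ∩ {x | x i = 0}) k') :=
    Set.Finite.bddAbove (Set.finite_range _)
  have hEnn : 0 ≤ E := by
    refine le_trans ?_ (le_ciSup hbddE ⟨0, by omega⟩)
    exact Real.sInf_nonneg fun ε hε => hε.1.le
  refine le_of_forall_pos_le_add fun η hη => ?_
  set ε := E + η / (2 * M) with hεdef
  have hEε : E < ε := by
    rw [hεdef]; have : 0 < η / (2 * M) := by positivity
    linarith
  have hεpos : 0 < ε := lt_of_le_of_lt hEnn hEε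
  -- covers of the hyperplane sections at radius ε
  have hcov : ∀ i : Fin d, ∃ c : Fin (2 ^ (k' - 1)) → (Fin d → ℝ),
      ({x | nX x ≤ 1} ∩ {x | x i = 0}) ⊆
        ⋃ r, (c r +ᵥ ε • (supBall d ∩ {x | x i = 0})) := by
    intro i
    have hfin0 : (0:ℕ) < 2 ^ (k' - 1) := pow_pos (by norm_num) _
    have hne : {γ : ℝ | 0 < γ ∧ ∃ c : Fin (2 ^ (k' - 1)) → (Fin d → ℝ),
        ({x | nX x ≤ 1} ∩ {x | x i = 0}) ⊆
          ⋃ r, (c r +ᵥ γ • (supBall d ∩ {x | x i = 0}))}.Nonempty := by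
      refine ⟨R + 1, by positivity, fun _ => 0, fun x hxm => ?_⟩
      have hxR : supNorm x ≤ R := hR x hxm.1
      refine Set.mem_iUnion.mpr ⟨⟨0, hfin0⟩, ?_⟩
      refine Set.mem_vadd_set.mpr ⟨(R+1) • ((R+1)⁻¹ • x), Set.smul_mem_smul_set ⟨?_, ?_⟩, ?_⟩
      · refine supNorm_le_of fun i' => ?_
        show |(R+1)⁻¹ * x i'| ≤ 1
        rw [abs_mul, abs_of_nonneg (by positivity : (0:ℝ) ≤ (R+1)⁻¹)]
        rw [inv_mul_le_iff₀ (by linarith), mul_one]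
        exact le_trans (le_trans (abs_le_supNorm x i') hxR) (by linarith)
      · show ((R+1)⁻¹ • x) i = 0
        have : x i = 0 := hxm.2
        simp [this]
      · rw [smul_inv_smul₀ (by positivity : (R:ℝ)+1 ≠ 0)]
        exact zero_vadd _ _
    have hlt : sInf {γ : ℝ | 0 < γ ∧ ∃ c : Fin (2 ^ (k' - 1)) → (Fin d → ℝ),
        ({x | nX x ≤ 1} ∩ {x | x i = 0}) ⊆
          ⋃ r, (c r +ᵥ γ • (supBall d ∩ {x | x i = 0}))} < ε :=
      lt_of_le_of_lt (le_ciSup hbddE i) hEε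
    obtain ⟨γ, hγmem, hγlt⟩ := exists_lt_of_csInf_lt hne hlt
    obtain ⟨hγpos, c, hcsub⟩ := hγmem
    refine ⟨c, fun x hxm => ?_⟩
    obtain ⟨r, hr⟩ := Set.mem_iUnion.mp (hcsub hxm)
    obtain ⟨w, hwmem, hwz⟩ := Set.mem_vadd_set.mp hr
    obtain ⟨v, hv, rfl⟩ := Set.mem_smul_set.mp hwmem
    refine Set.mem_iUnion.mpr ⟨r, Set.mem_vadd_set.mpr
      ⟨ε • ((γ/ε) • v), Set.smul_mem_smul_set ⟨?_, ?_⟩, ?_⟩⟩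
    · refine supNorm_le_of fun i' => ?_
      show |(γ/ε) * v i'| ≤ 1
      rw [abs_mul, abs_of_nonneg (le_of_lt (div_pos hγpos hεpos))]
      have h1 : |v i'| ≤ 1 := le_trans (abs_le_supNorm v i') hv.1
      have h2 : γ/ε ≤ 1 := (div_le_one hεpos).mpr hγlt.le
      nlinarith [abs_nonneg (v i'), (div_pos hγpos hεpos).le]
    · show ((γ/ε) • v) i = 0
      have : v i = 0 := hv.2
      simp [this]
    · rw [smul_smul]
      have : ε * (γ/ε) = γ := by field_simp
      rw [this]
      exact hwz
  choose cc hcc using hcov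
  -- the main construction
  have hmain : ∃ c : Fin (2 ^ (k - 1)) → (Fin d → ℝ),
      {x | nX x = 1} ⊆ ⋃ j, (c j +ᵥ (2 * M * ε) • {x | nY x ≤ 1}) := by
    classical
    set s : ℝ := 2 * ε with hsdef
    have hs : 0 < s := by positivity
    have hfb : ∀ (u : ℝ) (n : ℤ), ⌊u / s⌋ = n → (n : ℝ) * s ≤ u ∧ u < ((n : ℝ) + 1) * s := by
      intro u n hn
      constructor
      · have h1 : (n : ℝ) ≤ u / s := by rw [← hn]; exact Int.floor_le _
        calc (n:ℝ) * s ≤ (u/s) * s := mul_le_mul_of_nonneg_right h1 hs.le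
        _ = u := by field_simp
      · have h2 : u / s < (n : ℝ) + 1 := by
          have h3 := Int.lt_floor_add_one (u/s)
          rw [hn] at h3
          exact_mod_cast h3
        calc u = (u/s) * s := by field_simp
        _ < ((n:ℝ)+1) * s := mul_lt_mul_of_pos_right h2 hs
    set lo : Fin d → Fin (2 ^ (k' - 1)) → Fin d → ℤ := fun j r i' => ⌊(cc j r i' - ε) / s⌋ with hlodef
    set τf : (Fin d → ℤ) → Fin d → ℤ := fun b i' => if 0 ≤ b i' then 1 else -1 with hτfdef
    set bI : Fin d × Fin (2 ^ (k' - 1)) × (Fin d → Fin 2) → Fin d → ℤ := fun p i' =>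
      if i' = p.1 then -((p.2.2 p.1 : ℕ) : ℤ) else lo p.1 p.2.1 i' + ((p.2.2 i' : ℕ) : ℤ)
      with hbIdef
    set Tf : (Fin d → ℤ) → Set ℕ := fun b =>
      {t | ∃ x : Fin d → ℝ, nX x = 1 ∧ ∀ i', ⌊x i' / s⌋ = b i' + (t : ℤ) * τf b i'}
      with hTfdef
    set ctr : Fin d × Fin (2 ^ (k' - 1)) × (Fin d → Fin 2) → (Fin d → ℝ) := fun p =>
      if h : (Tf (bI p)).Nonempty then
        fun i' => ((bI p i' + ((sInf (Tf (bI p)) : ℕ) : ℤ) * τf (bI p) i'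
          + (if 0 ≤ bI p i' then 1 else 0) : ℤ) : ℝ) * s
      else 0 with hctrdef
    have hcard : Fintype.card (Fin d × Fin (2 ^ (k' - 1)) × (Fin d → Fin 2)) ≤ 2 ^ (k - 1) := by
      have h1 : Fintype.card (Fin d × Fin (2 ^ (k' - 1)) × (Fin d → Fin 2)) = d * (2 ^ (k' - 1) * 2 ^ d) := by
        simp [Fintype.card_prod, Fintype.card_fun]
      rw [h1]
      have h2 : 2 ^ (k-1) = 2 ^ (Nat.clog 2 d) * (2 ^ (k' - 1) * 2 ^ d) := by
        rw [← pow_add, ← pow_add]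
        congr 1
        omega
      rw [h2]
      have h3 : d ≤ 2 ^ Nat.clog 2 d := Nat.le_pow_clog (by norm_num) d
      exact Nat.mul_le_mul_right _ h3
    set ι : Fin d × Fin (2 ^ (k' - 1)) × (Fin d → Fin 2) → Fin (2 ^ (k - 1)) := fun p =>
      Fin.castLE hcard ((Fintype.equivFin _) p) with hιdef
    have hιinj : Function.Injective ι := fun a b hab => by
      have h1 : ((Fintype.equivFin (Fin d × Fin (2 ^ (k' - 1)) × (Fin d → Fin 2))) a) =
          ((Fintype.equivFin (Fin d × Fin (2 ^ (k' - 1)) × (Fin d → Fin 2))) b) := by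
        simp only [hιdef] at hab
        exact Fin.castLE_injective hcard hab
      exact (Fintype.equivFin _).injective h1
    refine ⟨fun j => if h : ∃ p, ι p = j then ctr h.choose else 0, fun x hx => ?_⟩
    simp only [Set.mem_setOf_eq] at hx
    -- the cell of x
    set m : Fin d → ℤ := fun i' => ⌊x i' / s⌋ with hm
    set L : Fin d → ℤ := fun i' => if 0 ≤ m i' then m i' else -m i' - 1 with hL
    have hL0 : ∀ i', 0 ≤ L i' := by
      intro i'
      simp only [hL]
      by_cases hsgn : 0 ≤ m i'
      · rw [if_pos hsgn]; exact hsgn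
      · rw [if_neg hsgn]; omega
    set ℓ : Fin d → ℕ := fun i' => (L i').toNat with hℓ
    have hLcast : ∀ i', (ℓ i' : ℤ) = L i' := fun i' => Int.toNat_of_nonneg (hL0 i')
    have huniv : (Finset.univ : Finset (Fin d)).Nonempty := Finset.univ_nonempty
    set tx : ℕ := Finset.univ.inf' huniv ℓ with htxdef
    obtain ⟨j, -, hjeq⟩ := Finset.exists_mem_eq_inf' huniv ℓ
    have htxle : ∀ i', (tx : ℤ) ≤ L i' := fun i' => by
      rw [← hLcast i']
      exact_mod_cast Finset.inf'_le ℓ (Finset.mem_univ i')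
    set τx : Fin d → ℤ := fun i' => if 0 ≤ m i' then 1 else -1 with hτx
    set bx : Fin d → ℤ := fun i' => m i' - (tx : ℤ) * τx i' with hbx
    have hbxsign : ∀ i', (0 ≤ bx i' ↔ 0 ≤ m i') := by
      intro i'
      by_cases hsgn : 0 ≤ m i'
      · have hτ : τx i' = 1 := by simp only [hτx]; rw [if_pos hsgn]
        have hLi : L i' = m i' := by simp only [hL]; rw [if_pos hsgn]
        have h1 := htxle i'
        rw [hLi] at h1
        simp only [hbx, hτ]
        constructor
        · intro _; exact hsgn
        · intro _; omega
      · have hτ : τx i' = -1 := by simp only [hτx]; rw [if_neg hsgn]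
        have hLi : L i' = -m i' - 1 := by simp only [hL]; rw [if_neg hsgn]
        have h1 := htxle i'
        rw [hLi] at h1
        simp only [hbx, hτ]
        constructor
        · intro h2; omega
        · intro h2; exact absurd h2 hsgn
    have hτfbx : ∀ i', τf bx i' = τx i' := by
      intro i'
      simp only [hτfdef, hτx]
      by_cases hsgn : 0 ≤ m i'
      · rw [if_pos ((hbxsign i').mpr hsgn), if_pos hsgn]
      · rw [if_neg (fun h => hsgn ((hbxsign i').mp h)), if_neg hsgn]
    set y : Fin d → ℝ := fun i' => x i' - ((tx : ℤ) * τx i' : ℤ) * s with hy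
    have hycell : ∀ i', ⌊y i' / s⌋ = bx i' := by
      intro i'
      have h1 : y i' / s = x i' / s - ((tx:ℤ) * τx i' : ℤ) := by
        simp only [hy]
        rw [sub_div, mul_div_assoc, div_self hs.ne', mul_one]
      rw [h1, Int.floor_sub_intCast]
    have hyx : ∀ i', 0 ≤ y i' * x i' ∧ |y i'| ≤ |x i'| := by
      intro i'
      have hxb := hfb (x i') (m i') (congrFun hm i').symm
      have htxnn : (0:ℝ) ≤ (tx:ℝ) * s := mul_nonneg (Nat.cast_nonneg tx) hs.le
      by_cases hsgn : 0 ≤ m i'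
      · have hτ : τx i' = 1 := by simp only [hτx]; rw [if_pos hsgn]
        have hLi : L i' = m i' := by simp only [hL]; rw [if_pos hsgn]
        have htx : (tx : ℤ) ≤ m i' := by rw [← hLi]; exact htxle i'
        have hyv : y i' = x i' - (tx : ℝ) * s := by
          simp only [hy, hτ]; push_cast; ring
        have hmnn : (0:ℝ) ≤ (m i' : ℝ) := by exact_mod_cast hsgn
        have hxnn : 0 ≤ x i' := le_trans (by nlinarith) hxb.1
        have htxR : (tx:ℝ) ≤ (m i':ℝ) := by exact_mod_cast htx
        have hynn : 0 ≤ y i' := by rw [hyv]; nlinarith [hxb.1]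
        refine ⟨mul_nonneg hynn hxnn, ?_⟩
        rw [abs_of_nonneg hynn, abs_of_nonneg hxnn, hyv]
        linarith
      · have hτ : τx i' = -1 := by simp only [hτx]; rw [if_neg hsgn]
        have hLi : L i' = -m i' - 1 := by simp only [hL]; rw [if_neg hsgn]
        have htx : (tx : ℤ) ≤ -m i' - 1 := by rw [← hLi]; exact htxle i'
        have hyv : y i' = x i' + (tx : ℝ) * s := by
          simp only [hy, hτ]; push_cast; ring
        have hm1 : (m i' : ℝ) + 1 ≤ 0 := by
          have h2 : m i' + 1 ≤ 0 := by omega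
          exact_mod_cast h2
        have hxneg : x i' < 0 := lt_of_lt_of_le hxb.2 (by nlinarith)
        have htxR : (tx:ℝ) ≤ -(m i':ℝ) - 1 := by exact_mod_cast htx
        have hyneg : y i' ≤ 0 := by
          rw [hyv]
          nlinarith [hxb.2]
        refine ⟨by nlinarith, ?_⟩
        rw [abs_of_nonpos hyneg, abs_of_nonpos hxneg.le, hyv]
        linarith
    have hyB : nX y ≤ 1 := by
      have h1 := hXmono y x (fun i' => (hyx i').1) (fun i' => (hyx i').2)
      rw [hx] at h1
      exact h1
    set z : Fin d → ℝ := Function.update y j 0 with hz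
    have hzy : ∀ i', i' ≠ j → z i' = y i' := fun i' h => Function.update_of_ne h _ _
    have hzj : z j = 0 := Function.update_self j 0 y
    have hzB : nX z ≤ 1 := by
      refine le_trans (hXmono z y (fun i' => ?_) (fun i' => ?_)) hyB
      · by_cases h : i' = j
        · subst h; rw [hzj]; simp
        · rw [hzy i' h]; exact mul_self_nonneg _
      · by_cases h : i' = j
        · subst h; rw [hzj]; simp [abs_nonneg]
        · rw [hzy i' h]
    obtain ⟨r, hr⟩ := Set.mem_iUnion.mp (hcc j ⟨hzB, hzj⟩)
    obtain ⟨w, hwmem, hwz⟩ := Set.mem_vadd_set.mp hr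
    obtain ⟨v, hv, rfl⟩ := Set.mem_smul_set.mp hwmem
    have hzc : ∀ i', |z i' - cc j r i'| ≤ ε := by
      intro i'
      have h1 : z i' = cc j r i' + ε * v i' := by
        rw [← hwz, vadd_eq_add]
        simp [smul_eq_mul]
      have h2 : |v i'| ≤ 1 := le_trans (abs_le_supNorm v i') hv.1
      rw [h1]
      calc |cc j r i' + ε * v i' - cc j r i'| = ε * |v i'| := by
            rw [add_sub_cancel_left, abs_mul, abs_of_nonneg hεpos.le]
      _ ≤ ε * 1 := mul_le_mul_of_nonneg_left h2 hεpos.le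
      _ = ε := mul_one ε
    have hsand : ∀ i', i' ≠ j → lo j r i' ≤ bx i' ∧ bx i' ≤ lo j r i' + 1 := by
      intro i' hne'
      have hfl : ⌊z i' / s⌋ = bx i' := by rw [hzy i' hne']; exact hycell i'
      have h12 := abs_le.mp (hzc i')
      constructor
      · rw [← hfl]
        simp only [hlodef]
        refine Int.floor_le_floor ?_
        have h3 : cc j r i' - ε ≤ z i' := by linarith [h12.1]
        gcongr
      · have hzle : z i' / s ≤ (cc j r i' - ε)/s + 1 := by
          have h3 : z i' ≤ (cc j r i' - ε) + s := by
            rw [hsdef]; linarith [h12.2]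
          calc z i'/s ≤ ((cc j r i' - ε) + s)/s := by gcongr
          _ = (cc j r i' - ε)/s + 1 := by field_simp
        rw [← hfl]
        calc ⌊z i'/s⌋ ≤ ⌊(cc j r i' - ε)/s + 1⌋ := Int.floor_le_floor hzle
        _ = lo j r i' + 1 := by rw [Int.floor_add_one]
    have htxL : (tx : ℤ) = L j := by
      rw [← hLcast j]
      exact_mod_cast congrArg (Nat.cast : ℕ → ℤ) hjeq
    have hbxj : bx j = 0 ∨ bx j = -1 := by
      by_cases hsgn : 0 ≤ m j
      · left
        have hτ : τx j = 1 := by simp only [hτx]; rw [if_pos hsgn]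
        have hLj : L j = m j := by simp only [hL]; rw [if_pos hsgn]
        simp only [hbx, hτ]
        omega
      · right
        have hτ : τx j = -1 := by simp only [hτx]; rw [if_neg hsgn]
        have hLj : L j = -m j - 1 := by simp only [hL]; rw [if_neg hsgn]
        simp only [hbx, hτ]
        omega
    set δ : Fin d → Fin 2 := fun i' => if i' = j then (if bx j = 0 then 0 else 1)
        else (if bx i' = lo j r i' then 0 else 1) with hδ
    set p₀ : Fin d × Fin (2 ^ (k' - 1)) × (Fin d → Fin 2) := (j, r, δ) with hp₀
    have hbp : bI p₀ = bx := by
      funext i'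
      by_cases hij : i' = j
      · subst hij
        simp only [hbIdef, hp₀, if_pos rfl, hδ]
        rcases hbxj with h0 | h1
        · rw [if_pos h0, h0]
          simp
        · rw [if_neg (by omega : ¬ bx i' = 0), h1]
          simp
      · simp only [hbIdef, hp₀, hδ, if_neg hij]
        by_cases hbl : bx i' = lo j r i'
        · rw [if_pos hbl, hbl]
          simp
        · rw [if_neg hbl]
          have h4 := hsand i' hij
          have hbl1 : bx i' = lo j r i' + 1 := by omega
          rw [hbl1]
          simp
    have hmeq : ∀ i', m i' = bx i' + (tx:ℤ) * τx i' := by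
      intro i'
      simp only [hbx]
      ring
    have htxT : tx ∈ Tf bx := by
      refine ⟨x, hx, fun i' => ?_⟩
      rw [hτfbx i', ← hmeq i']
    have hTne : (Tf bx).Nonempty := ⟨tx, htxT⟩
    set t₀ : ℕ := sInf (Tf bx) with ht₀def
    obtain ⟨x', hx'S, hx'cell⟩ := Nat.sInf_mem hTne
    simp only [← ht₀def] at hx'cell
    have ht₀le : t₀ ≤ tx := Nat.sInf_le htxT
    have hts : tx ≤ t₀ + 1 := by
      by_contra hcon
      push_neg at hcon
      have ht2 : (t₀:ℤ) + 2 ≤ (tx:ℤ) := by exact_mod_cast hcon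
      have habs : ∀ i', 0 ≤ x' i' * x i' ∧ |x' i'| < |x i'| := by
        intro i'
        have hc' := hx'cell i'
        rw [hτfbx i'] at hc'
        have hxb := hfb (x i') (m i') (congrFun hm i').symm
        have hx'b := hfb (x' i') (bx i' + (t₀:ℤ) * τx i') hc'
        by_cases hsgn : 0 ≤ m i'
        · have hτ : τx i' = 1 := by simp only [hτx]; rw [if_pos hsgn]
          have hbnn : 0 ≤ bx i' := (hbxsign i').mpr hsgn
          have hbR : (0:ℝ) ≤ (bx i' : ℝ) := by exact_mod_cast hbnn
          rw [hτ] at hx'b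
          have hmR : (m i' : ℝ) = (bx i' : ℝ) + (tx:ℝ) := by
            have h5 := hmeq i'
            rw [hτ] at h5
            have h5' : m i' = bx i' + (tx:ℤ) := by omega
            exact_mod_cast h5'
          have ht2R : (t₀:ℝ) + 2 ≤ (tx:ℝ) := by exact_mod_cast ht2
          have hx'l : ((bx i' :ℝ) + (t₀:ℝ)) * s ≤ x' i' := by
            have := hx'b.1; push_cast at this ⊢; linarith
          have hx'u : x' i' < ((bx i' :ℝ) + (t₀:ℝ) + 1) * s := by
            have := hx'b.2; push_cast at this ⊢; linarith
          have hxl : ((bx i':ℝ) + (tx:ℝ)) * s ≤ x i' := by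
            have := hxb.1; rw [hmR] at this; linarith
          have hx'nn : 0 ≤ x' i' :=
            le_trans (mul_nonneg (add_nonneg hbR (by positivity)) hs.le) hx'l
          have hxnn : 0 ≤ x i' :=
            le_trans (mul_nonneg (add_nonneg hbR (by positivity)) hs.le) hxl
          refine ⟨mul_nonneg hx'nn hxnn, ?_⟩
          rw [abs_of_nonneg hx'nn, abs_of_nonneg hxnn]
          nlinarith
        · have hτ : τx i' = -1 := by simp only [hτx]; rw [if_neg hsgn]
          have hbneg : bx i' ≤ -1 := by
            have h6 : ¬ 0 ≤ bx i' := fun h => hsgn ((hbxsign i').mp h)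
            omega
          have hbR : (bx i' : ℝ) ≤ -1 := by exact_mod_cast hbneg
          rw [hτ] at hx'b
          have hmR : (m i' : ℝ) = (bx i' : ℝ) - (tx:ℝ) := by
            have h5 := hmeq i'
            rw [hτ] at h5
            have h5' : m i' = bx i' - (tx:ℤ) := by omega
            exact_mod_cast h5'
          have ht2R : (t₀:ℝ) + 2 ≤ (tx:ℝ) := by exact_mod_cast ht2
          have hx'u : x' i' < ((bx i':ℝ) - (t₀:ℝ) + 1) * s := by
            have := hx'b.2; push_cast at this ⊢; linarith
          have hx'l : ((bx i':ℝ) - (t₀:ℝ)) * s ≤ x' i' := by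
            have := hx'b.1; push_cast at this ⊢; linarith
          have hxu : x i' < ((bx i':ℝ) - (tx:ℝ) + 1) * s := by
            have := hxb.2; rw [hmR] at this; linarith
          have hxl : ((bx i':ℝ) - (tx:ℝ)) * s ≤ x i' := by
            have := hxb.1; rw [hmR] at this; linarith
          have hfac1 : ((bx i':ℝ) - (t₀:ℝ) + 1) ≤ 0 := by
            have h9 : (0:ℝ) ≤ (t₀:ℝ) := by positivity
            linarith
          have hfac2 : ((bx i':ℝ) - (tx:ℝ) + 1) ≤ 0 := by
            have h9 : (0:ℝ) ≤ (tx:ℝ) := by positivity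
            linarith
          have hx'neg : x' i' ≤ 0 := le_of_lt (lt_of_lt_of_le hx'u
            (mul_nonpos_iff.mpr (Or.inr ⟨hfac1, hs.le⟩)))
          have hxneg : x i' ≤ 0 := le_of_lt (lt_of_lt_of_le hxu
            (mul_nonpos_iff.mpr (Or.inr ⟨hfac2, hs.le⟩)))
          refine ⟨by nlinarith, ?_⟩
          rw [abs_of_nonpos hx'neg, abs_of_nonpos hxneg]
          nlinarith
      have hstrict := hXstrict x' x (fun i' => (habs i').1) (fun i' => (habs i').2)
      rw [hx'S, hx] at hstrict
      exact lt_irrefl 1 hstrict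
    have hctrfun : ctr p₀ = fun i' => ((bx i' + (t₀:ℤ) * τx i'
        + (if 0 ≤ bx i' then 1 else 0) : ℤ) : ℝ) * s := by
      simp only [hctrdef, hbp]
      rw [dif_pos hTne]
      funext i'
      rw [hτfbx i', ← ht₀def]
    have hctr : ∀ i', ctr p₀ i' = ((bx i' + (t₀:ℤ) * τx i'
        + (if 0 ≤ bx i' then 1 else 0) : ℤ) : ℝ) * s := fun i' => congrFun hctrfun i'
    have hdist : ∀ i', |x i' - ctr p₀ i'| ≤ s := by
      intro i'
      rw [hctr i']
      have hxb := hfb (x i') (m i') (congrFun hm i').symm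
      have ht₀R : (t₀:ℝ) ≤ (tx:ℝ) := by exact_mod_cast ht₀le
      have htsR : (tx:ℝ) ≤ (t₀:ℝ) + 1 := by exact_mod_cast hts
      by_cases hsgn : 0 ≤ m i'
      · have hτ : τx i' = 1 := by simp only [hτx]; rw [if_pos hsgn]
        have hbnn : 0 ≤ bx i' := (hbxsign i').mpr hsgn
        have hmR : (m i' : ℝ) = (bx i' : ℝ) + (tx:ℝ) := by
          have h5 := hmeq i'
          rw [hτ] at h5
          have h5' : m i' = bx i' + (tx:ℤ) := by omega
          exact_mod_cast h5'
        rw [hτ, if_pos hbnn]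
        have hcast : ((bx i' + (t₀:ℤ) * 1 + 1 : ℤ) : ℝ) = (bx i':ℝ) + (t₀:ℝ) + 1 := by
          push_cast; ring
        rw [hcast]
        have hxl := hxb.1
        have hxu := hxb.2
        rw [hmR] at hxl hxu
        rw [abs_le]
        constructor <;> nlinarith
      · have hτ : τx i' = -1 := by simp only [hτx]; rw [if_neg hsgn]
        have hbneg : ¬ 0 ≤ bx i' := fun h => hsgn ((hbxsign i').mp h)
        have hmR : (m i' : ℝ) = (bx i' : ℝ) - (tx:ℝ) := by
          have h5 := hmeq i'
          rw [hτ] at h5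
          have h5' : m i' = bx i' - (tx:ℤ) := by omega
          exact_mod_cast h5'
        rw [hτ, if_neg hbneg]
        have hcast : ((bx i' + (t₀:ℤ) * (-1) + 0 : ℤ) : ℝ) = (bx i':ℝ) - (t₀:ℝ) := by
          push_cast; ring
        rw [hcast]
        have hxl := hxb.1
        have hxu := hxb.2
        rw [hmR] at hxl hxu
        rw [abs_le]
        constructor <;> nlinarith
    have hsup : supNorm (x - ctr p₀) ≤ 2 * ε := by
      refine supNorm_le_of fun i' => ?_
      have h7 := hdist i'
      rw [hsdef] at h7
      simpa using h7
    refine Set.mem_iUnion.mpr ⟨ι p₀, ?_⟩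
    have hex : ∃ p, ι p = ι p₀ := ⟨p₀, rfl⟩
    have hch : hex.choose = p₀ := hιinj hex.choose_spec
    show x ∈ (if h : ∃ p, ι p = ι p₀ then ctr h.choose else 0) +ᵥ (2 * M * ε) • {x | nY x ≤ 1}
    rw [dif_pos hex, hch]
    have hMε : (0:ℝ) < 2 * M * ε := by positivity
    refine Set.mem_vadd_set.mpr ⟨(2*M*ε) • ((2*M*ε)⁻¹ • (x - ctr p₀)),
      Set.smul_mem_smul_set ?_, ?_⟩
    · show nY ((2*M*ε)⁻¹ • (x - ctr p₀)) ≤ 1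
      rw [hYhom, abs_of_nonneg (by positivity : (0:ℝ) ≤ (2*M*ε)⁻¹)]
      have h1 : nY (x - ctr p₀) ≤ M * (2*ε) :=
        le_trans (hMle _) (mul_le_mul_of_nonneg_left hsup hMpos.le)
      calc (2*M*ε)⁻¹ * nY (x - ctr p₀) ≤ (2*M*ε)⁻¹ * (M * (2*ε)) :=
        mul_le_mul_of_nonneg_left h1 (by positivity)
      _ = 1 := by field_simp
    · rw [smul_inv_smul₀ hMε.ne']
      show ctr p₀ +ᵥ (x - ctr p₀) = x
      simp [vadd_eq_add]
  have h2Mε : entropyNumber {x | nX x = 1} {x | nY x ≤ 1} k ≤ 2 * M * ε := by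
    refine csInf_le ⟨0, fun y hy => hy.1.le⟩ ⟨by positivity, hmain⟩
  calc entropyNumber {x | nX x = 1} {x | nY x ≤ 1} k ≤ 2 * M * ε := h2Mε
  _ = 2 * M * E + η := by rw [hεdef]; field_simp
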